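/- Let H be an inner product space over ℂ, xᵢ, yᵢ ∈ H, pᵢ ≥ 0 with Σᵢ pᵢ = 1, and x, X, y, Y ∈ H such that Re⟨X − xᵢ, xᵢ − x⟩ ≥ 0 and Re⟨Y − yᵢ, yᵢ − y⟩ ≥ 0 for all i. Then |Σᵢ pᵢ⟨xᵢ,yᵢ⟩ − ⟨Σᵢ pᵢxᵢ, Σᵢ pᵢyᵢ⟩| ≤ (1/4)‖X − x‖‖Y − y‖. -/

import Mathlib

lemma quarter' {H : Type*} [NormedAddCommGroup H] [InnerProductSpace ℂ H] (a b : H) :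
    (inner ℂ a b : ℂ).re ≤ 1/4 * ‖a + b‖^2 := by
  have h := @norm_add_sq ℂ H _ _ _ a b
  have h2 := @re_inner_le_norm ℂ H _ _ _ a b
  simp only [RCLike.re_to_complex] at h h2
  nlinarith [sq_nonneg (‖a‖ - ‖b‖)]

lemma var_bound' {H : Type*} [NormedAddCommGroup H] [InnerProductSpace ℂ H] {n : ℕ}
    (xv : Fin n → H) (p : Fin n → ℝ) (hp : ∀ i, 0 ≤ p i) (hp1 : ∑ i, p i = 1)
    (x X : H) (hx : ∀ i, 0 ≤ (inner ℂ (X - xv i) (xv i - x) : ℂ).re) :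
    ∑ i, p i * ‖xv i - ∑ j, (p j : ℂ) • xv j‖^2 ≤ 1/4 * ‖X - x‖^2 := by
  set m : H := ∑ j, (p j : ℂ) • xv j with hm
  -- re of p*z
  have hre : ∀ (z : ℂ) (r : ℝ), ((r : ℂ) * z).re = r * z.re := by
    intro z r; simp [Complex.mul_re]
  -- ∑ pᵢ re⟨xᵢ, m⟩ = ‖m‖²
  have hsum1 : ∑ i, p i * (inner ℂ (xv i) m : ℂ).re = ‖m‖^2 := by
    have h1 : (inner ℂ m m : ℂ) = ∑ i, (p i : ℂ) * (inner ℂ (xv i) m : ℂ) := by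
      rw [hm, sum_inner]
      refine Finset.sum_congr rfl fun i _ => ?_
      rw [inner_smul_left, Complex.conj_ofReal]
    have h2 : ((inner ℂ m m : ℂ)).re = ‖m‖^2 := by
      have := @inner_self_eq_norm_sq ℂ H _ _ _ m
      simpa [RCLike.re_to_complex] using this
    rw [← h2, h1, Complex.re_sum]
    exact Finset.sum_congr rfl fun i _ => (hre _ _).symm
  -- ∑ pᵢ re⟨X, xᵢ⟩ = re⟨X, m⟩
  have hsum2 : ∑ i, p i * (inner ℂ X (xv i) : ℂ).re = (inner ℂ X m : ℂ).re := by
    rw [hm, inner_sum, Complex.re_sum]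
    exact (Finset.sum_congr rfl fun i _ => by rw [inner_smul_right, hre]).symm
  -- ∑ pᵢ re⟨xᵢ, x⟩ = re⟨m, x⟩
  have hsum3 : ∑ i, p i * (inner ℂ (xv i) x : ℂ).re = (inner ℂ m x : ℂ).re := by
    rw [hm, sum_inner, Complex.re_sum]
    exact (Finset.sum_congr rfl fun i _ => by
      rw [inner_smul_left, Complex.conj_ofReal, hre]).symm
  have hns : ∀ i, ‖xv i‖^2 = (inner ℂ (xv i) (xv i) : ℂ).re := by
    intro i
    have := @inner_self_eq_norm_sq ℂ H _ _ _ (xv i)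
    simpa [RCLike.re_to_complex] using this.symm
  -- per-i bound
  have hxi : ∀ i, ‖xv i‖^2 ≤ (inner ℂ X (xv i) : ℂ).re + (inner ℂ (xv i) x : ℂ).re
      - (inner ℂ X x : ℂ).re := by
    intro i
    have h := hx i
    have hexp : (inner ℂ (X - xv i) (xv i - x) : ℂ) =
        inner ℂ X (xv i) - inner ℂ X x - inner ℂ (xv i) (xv i) + inner ℂ (xv i) x := by
      simp [inner_sub_left, inner_sub_right]; ring
    rw [hexp] at h
    simp only [Complex.add_re, Complex.sub_re] at h
    rw [hns i]; linarith
  -- norm sq expansion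
  have hnsq : ∀ i, ‖xv i - m‖^2 = ‖xv i‖^2 - 2 * (inner ℂ (xv i) m : ℂ).re + ‖m‖^2 := by
    intro i
    have := @norm_sub_sq ℂ H _ _ _ (xv i) m
    simpa [RCLike.re_to_complex] using this
  have key : ∑ i, p i * ‖xv i - m‖^2 = ∑ i, p i * ‖xv i‖^2 - ‖m‖^2 := by
    have : ∑ i, p i * ‖xv i - m‖^2
        = ∑ i, (p i * ‖xv i‖^2 - 2 * (p i * (inner ℂ (xv i) m : ℂ).re) + p i * ‖m‖^2) := by
      refine Finset.sum_congr rfl fun i _ => ?_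
      rw [hnsq i]; ring
    rw [this, Finset.sum_add_distrib, Finset.sum_sub_distrib, ← Finset.mul_sum, hsum1,
      ← Finset.sum_mul, hp1]
    ring
  have hsumle : ∑ i, p i * ‖xv i‖^2 ≤ (inner ℂ X m : ℂ).re + (inner ℂ m x : ℂ).re
      - (inner ℂ X x : ℂ).re := by
    rw [← hsum2, ← hsum3]
    calc ∑ i, p i * ‖xv i‖^2
        ≤ ∑ i, p i * ((inner ℂ X (xv i) : ℂ).re + (inner ℂ (xv i) x : ℂ).re
            - (inner ℂ X x : ℂ).re) := by
          refine Finset.sum_le_sum fun i _ => ?_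
          exact mul_le_mul_of_nonneg_left (hxi i) (hp i)
      _ = ∑ i, p i * (inner ℂ X (xv i) : ℂ).re + ∑ i, p i * (inner ℂ (xv i) x : ℂ).re
            - (inner ℂ X x : ℂ).re := by
          simp only [mul_add, mul_sub, Finset.sum_add_distrib, Finset.sum_sub_distrib]
          rw [← Finset.sum_mul, hp1, one_mul]
  have hmid : (inner ℂ (X - m) (m - x) : ℂ).re =
      (inner ℂ X m : ℂ).re + (inner ℂ m x : ℂ).re - (inner ℂ X x : ℂ).re - ‖m‖^2 := by
    have hexp : (inner ℂ (X - m) (m - x) : ℂ) =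
        inner ℂ X m - inner ℂ X x - inner ℂ m m + inner ℂ m x := by
      simp [inner_sub_left, inner_sub_right]; ring
    have h2 : ((inner ℂ m m : ℂ)).re = ‖m‖^2 := by
      have := @inner_self_eq_norm_sq ℂ H _ _ _ m
      simpa [RCLike.re_to_complex] using this
    rw [hexp]; simp only [Complex.add_re, Complex.sub_re]; rw [h2]; ring
  have hfin : (inner ℂ (X - m) (m - x) : ℂ).re ≤ 1/4 * ‖X - x‖^2 := by
    have := quarter' (X - m) (m - x)
    simpa using this
  rw [key]; linarith

/-- Grüss inequality in a complex inner ℂ product space: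
if `Re⟨X − xᵢ, xᵢ − x⟩ ≥ 0` and `Re⟨Y − yᵢ, yᵢ − y⟩ ≥ 0` for all `i`, then
`|Σᵢ pᵢ⟨xᵢ,yᵢ⟩ − ⟨Σᵢ pᵢxᵢ, Σᵢ pᵢyᵢ⟩| ≤ (1/4)‖X − x‖‖Y − y‖`. -/
theorem stmt13 {H : Type*} [NormedAddCommGroup H] [InnerProductSpace ℂ H]
    (n : ℕ) (xv yv : Fin n → H) (p : Fin n → ℝ)
    (hp : ∀ i, 0 ≤ p i) (hp1 : ∑ i, p i = 1)
    (x X y Y : H)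
    (hx : ∀ i, 0 ≤ (inner ℂ (X - xv i) (xv i - x) : ℂ).re)
    (hy : ∀ i, 0 ≤ (inner ℂ (Y - yv i) (yv i - y) : ℂ).re) :
    ‖∑ i, (p i : ℂ) * (inner ℂ (xv i) (yv i) : ℂ) -
        (inner ℂ (∑ i, (p i : ℂ) • xv i) (∑ i, (p i : ℂ) • yv i) : ℂ)‖ ≤
      (1 / 4) * ‖X - x‖ * ‖Y - y‖ := by
  set mx : H := ∑ j, (p j : ℂ) • xv j with hmx
  set my : H := ∑ j, (p j : ℂ) • yv j with hmy
  have hp1c : ∑ i, (p i : ℂ) = 1 := by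
    rw [← Complex.ofReal_sum]; exact_mod_cast hp1
  -- identity: A = ∑ pᵢ ⟨xᵢ - mx, yᵢ - my⟩
  have hS2 : ∑ i, (p i : ℂ) * (inner ℂ (xv i) my : ℂ) = (inner ℂ mx my : ℂ) := by
    rw [hmx, sum_inner]
    exact (Finset.sum_congr rfl fun i _ => by
      rw [inner_smul_left, Complex.conj_ofReal]).symm
  have hS3 : ∑ i, (p i : ℂ) * (inner ℂ mx (yv i) : ℂ) = (inner ℂ mx my : ℂ) := by
    rw [hmy, inner_sum]
    exact (Finset.sum_congr rfl fun i _ => by rw [inner_smul_right]).symm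
  have hA : ∑ i, (p i : ℂ) * (inner ℂ (xv i) (yv i) : ℂ) - (inner ℂ mx my : ℂ)
      = ∑ i, (p i : ℂ) * (inner ℂ (xv i - mx) (yv i - my) : ℂ) := by
    have hexp : ∀ i, (p i : ℂ) * (inner ℂ (xv i - mx) (yv i - my) : ℂ)
        = (p i : ℂ) * inner ℂ (xv i) (yv i) - (p i : ℂ) * inner ℂ (xv i) my
          - (p i : ℂ) * inner ℂ mx (yv i) + (p i : ℂ) * inner ℂ mx my := by
      intro i; simp [inner_sub_left, inner_sub_right]; ring
    rw [Finset.sum_congr rfl fun i _ => hexp i]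
    rw [Finset.sum_add_distrib, Finset.sum_sub_distrib, Finset.sum_sub_distrib,
      hS2, hS3, ← Finset.sum_mul, hp1c]
    ring
  -- norm bound
  have hnorm : ‖∑ i, (p i : ℂ) * (inner ℂ (xv i) (yv i) : ℂ) - (inner ℂ mx my : ℂ)‖
      ≤ ∑ i, p i * (‖xv i - mx‖ * ‖yv i - my‖) := by
    rw [hA]
    calc ‖∑ i, (p i : ℂ) * (inner ℂ (xv i - mx) (yv i - my) : ℂ)‖
        ≤ ∑ i, ‖(p i : ℂ) * (inner ℂ (xv i - mx) (yv i - my) : ℂ)‖ :=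
          norm_sum_le _ _
      _ ≤ ∑ i, p i * (‖xv i - mx‖ * ‖yv i - my‖) := by
          refine Finset.sum_le_sum fun i _ => ?_
          rw [norm_mul, Complex.norm_real, Real.norm_eq_abs, abs_of_nonneg (hp i)]
          exact mul_le_mul_of_nonneg_left (norm_inner_le_norm _ _) (hp i)
  -- Cauchy–Schwarz
  set Sx : ℝ := ∑ i, p i * ‖xv i - mx‖^2 with hSx
  set Sy : ℝ := ∑ i, p i * ‖yv i - my‖^2 with hSy
  have hcs : (∑ i, p i * (‖xv i - mx‖ * ‖yv i - my‖))^2 ≤ Sx * Sy := by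
    have h := Finset.sum_mul_sq_le_sq_mul_sq Finset.univ
      (fun i => Real.sqrt (p i) * ‖xv i - mx‖) (fun i => Real.sqrt (p i) * ‖yv i - my‖)
    have e1 : ∀ i : Fin n, (Real.sqrt (p i) * ‖xv i - mx‖) * (Real.sqrt (p i) * ‖yv i - my‖)
        = p i * (‖xv i - mx‖ * ‖yv i - my‖) := by
      intro i
      rw [show (Real.sqrt (p i) * ‖xv i - mx‖) * (Real.sqrt (p i) * ‖yv i - my‖)
          = (Real.sqrt (p i) * Real.sqrt (p i)) * (‖xv i - mx‖ * ‖yv i - my‖) by ring,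
        Real.mul_self_sqrt (hp i)]
    have e2 : ∀ i : Fin n, (Real.sqrt (p i) * ‖xv i - mx‖)^2 = p i * ‖xv i - mx‖^2 := by
      intro i; rw [mul_pow, Real.sq_sqrt (hp i)]
    have e3 : ∀ i : Fin n, (Real.sqrt (p i) * ‖yv i - my‖)^2 = p i * ‖yv i - my‖^2 := by
      intro i; rw [mul_pow, Real.sq_sqrt (hp i)]
    calc (∑ i, p i * (‖xv i - mx‖ * ‖yv i - my‖))^2
        = (∑ i, (Real.sqrt (p i) * ‖xv i - mx‖) * (Real.sqrt (p i) * ‖yv i - my‖))^2 := by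
          rw [Finset.sum_congr rfl fun i _ => (e1 i).symm]
      _ ≤ (∑ i, (Real.sqrt (p i) * ‖xv i - mx‖)^2) * ∑ i, (Real.sqrt (p i) * ‖yv i - my‖)^2 := h
      _ = Sx * Sy := by
          rw [Finset.sum_congr rfl fun i _ => e2 i, Finset.sum_congr rfl fun i _ => e3 i]
  have hSxb : Sx ≤ 1/4 * ‖X - x‖^2 := var_bound' xv p hp hp1 x X hx
  have hSyb : Sy ≤ 1/4 * ‖Y - y‖^2 := var_bound' yv p hp hp1 y Y hy
  have hSx0 : 0 ≤ Sx := Finset.sum_nonneg fun i _ => mul_nonneg (hp i) (sq_nonneg _)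
  have hSy0 : 0 ≤ Sy := Finset.sum_nonneg fun i _ => mul_nonneg (hp i) (sq_nonneg _)
  have hT0 : 0 ≤ ∑ i, p i * (‖xv i - mx‖ * ‖yv i - my‖) :=
    Finset.sum_nonneg fun i _ => mul_nonneg (hp i) (mul_nonneg (norm_nonneg _) (norm_nonneg _))
  have hRHS : (1/4 : ℝ) * ‖X - x‖ * ‖Y - y‖ ≥ 0 := by positivity
  nlinarith [norm_nonneg (∑ i, (p i : ℂ) * (inner ℂ (xv i) (yv i) : ℂ) - (inner ℂ mx my : ℂ)),
    sq_nonneg (‖X - x‖ * ‖Y - y‖), norm_nonneg (X - x), norm_nonneg (Y - y),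
    mul_le_mul hSxb hSyb hSy0 (by positivity)]
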